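/- Suppose Σ ∈ P(X) is a weakly compatible irreducible collection of partial splits of X. Then any two split closures of Σ obtained using solely the combined M/Y-rule θ_{M/Y} (which at each step applies either θ_M or θ_Y, with (P) the property of being weakly compatible) are equal. -/

import Mathlib

/-!
Common definitions: partial splits of a finite set `X`, modelled as unordered
pairs (`Sym2`) of nonempty disjoint subsets of `X`; the `M`-, `Y`- and `Z`-
closure rules; weak compatibility; `X`-cycles and display; split closure
sequences and split closures.
-/

variable {X : Type*}

/-- `S` is a partial split of `X`: an unordered pair of nonempty disjoint subsets of `X`. -/
def IsPartialSplit (S : Sym2 (Set X)) : Prop :=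
  ∃ A B : Set X, S = s(A, B) ∧ A.Nonempty ∧ B.Nonempty ∧ Disjoint A B

/-- `S` is a full split of `X`: a partial split whose two parts cover `X`. -/
def IsFullSplit (S : Sym2 (Set X)) : Prop :=
  ∃ A B : Set X, S = s(A, B) ∧ A.Nonempty ∧ B.Nonempty ∧ Disjoint A B ∧ A ∪ B = Set.univ

/-- The partial split `S` extends the partial split `T`. -/
def SplitExtends (S T : Sym2 (Set X)) : Prop :=
  ∃ A B C D : Set X, S = s(A, B) ∧ T = s(C, D) ∧ C ⊆ A ∧ D ⊆ B

/-- `Sig ⪯ Sig'`: every partial split of `Sig` is extended by one of `Sig'`. -/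
def Preceq (Sig Sig' : Set (Sym2 (Set X))) : Prop :=
  ∀ S ∈ Sig, ∃ T ∈ Sig', SplitExtends T S

/-- `Sig⁻`: the set obtained from `Sig` by removing all redundant partial splits,
i.e. those extended by a different element of `Sig`. -/
def sreduce (Sig : Set (Sym2 (Set X))) : Set (Sym2 (Set X)) :=
  {S | S ∈ Sig ∧ ¬ ∃ T ∈ Sig, T ≠ S ∧ SplitExtends T S}

/-- `Sig ∈ P(X)`: `Sig` is an irreducible collection of partial splits of `X`. -/
def InPX (Sig : Set (Sym2 (Set X))) : Prop :=
  (∀ S ∈ Sig, IsPartialSplit S) ∧ sreduce Sig = Sig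

/-- Two partial splits are compatible if some part of one is disjoint from some part
of the other. -/
def SplitCompatible (S T : Sym2 (Set X)) : Prop :=
  ∃ A B C D : Set X, S = s(A, B) ∧ T = s(C, D) ∧ A ∩ C = ∅

/-- Weak compatibility of a (multi)triple of partial splits: for every choice of parts,
one of the four distinguished triple intersections is empty. -/
def WeaklyCompatTriple (S1 S2 S3 : Sym2 (Set X)) : Prop :=
  ∀ A1 B1 A2 B2 A3 B3 : Set X,
    S1 = s(A1, B1) → S2 = s(A2, B2) → S3 = s(A3, B3) →
    A1 ∩ A2 ∩ A3 = ∅ ∨ B1 ∩ B2 ∩ A3 = ∅ ∨ B1 ∩ A2 ∩ B3 = ∅ ∨ A1 ∩ B2 ∩ B3 = ∅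

/-- A collection of partial splits is weakly compatible if every three of its members are. -/
def WeaklyCompatible (Sig : Set (Sym2 (Set X))) : Prop :=
  ∀ S1 ∈ Sig, ∀ S2 ∈ Sig, ∀ S3 ∈ Sig, WeaklyCompatTriple S1 S2 S3

/-- Condition of the `M`-rule for the parts `A1|B1`, `A2|B2`. -/
def mCond (A1 B1 A2 B2 : Set X) : Prop :=
  (A1 ∩ A2).Nonempty ∧ (B1 ∩ B2).Nonempty

/-- Output of the `M`-rule applied with respect to the parts `A1|B1`, `A2|B2`. -/
def mOut (A1 B1 A2 B2 : Set X) : Set (Sym2 (Set X)) :=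
  {s(A1, B1), s(A2, B2), s(A1 ∩ A2, B1 ∪ B2), s(B1 ∩ B2, A1 ∪ A2)}

/-- Condition of the `Y`-rule for the parts `A1|B1`, `A2|B2`, `A3|B3`. -/
def yCond (A1 B1 A2 B2 A3 B3 : Set X) : Prop :=
  (A1 ∩ A2 ∩ A3).Nonempty ∧ (B1 ∩ B2 ∩ A3).Nonempty ∧
    (B1 ∩ A2 ∩ B3).Nonempty ∧ A1 ∩ B2 ∩ B3 = ∅

/-- Output of the `Y`-rule applied with respect to the parts `A1|B1`, `A2|B2`, `A3|B3`. -/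
def yOut (A1 B1 A2 B2 A3 B3 : Set X) : Set (Sym2 (Set X)) :=
  {s(B1 ∪ (B2 ∩ B3), A1), s(A2 ∪ (A1 ∩ B3), B2), s(A3 ∪ (A1 ∩ B2), B3)}

/-- Condition of the `Z`-rule for the parts `A1|B1`, `A2|B2`. -/
def zCond (A1 B1 A2 B2 : Set X) : Prop :=
  (A1 ∩ A2).Nonempty ∧ (A2 ∩ B1).Nonempty ∧ (B1 ∩ B2).Nonempty ∧ A1 ∩ B2 = ∅

/-- Output of the `Z`-rule applied with respect to the parts `A1|B1`, `A2|B2`. -/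
def zOut (A1 B1 A2 B2 : Set X) : Set (Sym2 (Set X)) :=
  {s(B1 ∪ B2, A1), s(B2, A1 ∪ A2)}

/-- `Sig'` is obtained from `Sig` by a single application of the `Y`-rule. -/
def yStep (Sig Sig' : Set (Sym2 (Set X))) : Prop :=
  ∃ A1 B1 A2 B2 A3 B3 : Set X,
    s(A1, B1) ∈ Sig ∧ s(A2, B2) ∈ Sig ∧ s(A3, B3) ∈ Sig ∧
    s(A1, B1) ≠ s(A2, B2) ∧ s(A1, B1) ≠ s(A3, B3) ∧ s(A2, B2) ≠ s(A3, B3) ∧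
    yCond A1 B1 A2 B2 A3 B3 ∧
    Sig' = sreduce (Sig ∪ yOut A1 B1 A2 B2 A3 B3)

/-- `Sig'` is obtained from `Sig` by a single application of the `M`-rule. -/
def mStep (Sig Sig' : Set (Sym2 (Set X))) : Prop :=
  ∃ A1 B1 A2 B2 : Set X,
    s(A1, B1) ∈ Sig ∧ s(A2, B2) ∈ Sig ∧ s(A1, B1) ≠ s(A2, B2) ∧
    mCond A1 B1 A2 B2 ∧
    Sig' = sreduce (Sig ∪ mOut A1 B1 A2 B2)

/-- `Sig'` is obtained from `Sig` by a single non-trivial application of the `Y`-rule. -/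
def yStepNT (Sig Sig' : Set (Sym2 (Set X))) : Prop :=
  ∃ A1 B1 A2 B2 A3 B3 : Set X,
    s(A1, B1) ∈ Sig ∧ s(A2, B2) ∈ Sig ∧ s(A3, B3) ∈ Sig ∧
    s(A1, B1) ≠ s(A2, B2) ∧ s(A1, B1) ≠ s(A3, B3) ∧ s(A2, B2) ≠ s(A3, B3) ∧
    yCond A1 B1 A2 B2 A3 B3 ∧
    ¬ Preceq (sreduce (yOut A1 B1 A2 B2 A3 B3)) Sig ∧
    Sig' = sreduce (Sig ∪ yOut A1 B1 A2 B2 A3 B3)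

/-- `Sig'` is obtained from `Sig` by a single non-trivial application of the `M`-rule. -/
def mStepNT (Sig Sig' : Set (Sym2 (Set X))) : Prop :=
  ∃ A1 B1 A2 B2 : Set X,
    s(A1, B1) ∈ Sig ∧ s(A2, B2) ∈ Sig ∧ s(A1, B1) ≠ s(A2, B2) ∧
    mCond A1 B1 A2 B2 ∧
    ¬ Preceq (sreduce (mOut A1 B1 A2 B2)) Sig ∧
    Sig' = sreduce (Sig ∪ mOut A1 B1 A2 B2)

/-- `Sig` is closed under the `Y`-rule: every application of the `Y`-rule to `Sig` is trivial. -/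
def yClosed (Sig : Set (Sym2 (Set X))) : Prop :=
  ∀ A1 B1 A2 B2 A3 B3 : Set X,
    s(A1, B1) ∈ Sig → s(A2, B2) ∈ Sig → s(A3, B3) ∈ Sig →
    s(A1, B1) ≠ s(A2, B2) → s(A1, B1) ≠ s(A3, B3) → s(A2, B2) ≠ s(A3, B3) →
    yCond A1 B1 A2 B2 A3 B3 →
    Preceq (sreduce (yOut A1 B1 A2 B2 A3 B3)) Sig

/-- `Sig` is closed under the `M`-rule: every application of the `M`-rule to `Sig` is trivial. -/
def mClosed (Sig : Set (Sym2 (Set X))) : Prop :=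
  ∀ A1 B1 A2 B2 : Set X,
    s(A1, B1) ∈ Sig → s(A2, B2) ∈ Sig → s(A1, B1) ≠ s(A2, B2) →
    mCond A1 B1 A2 B2 →
    Preceq (sreduce (mOut A1 B1 A2 B2)) Sig

/-- A split closure sequence for `Sig` of length `n` with respect to the property `P` and
the non-trivial single-application relation `stepNT`: a strictly `⪯`-increasing sequence
in `P(X)` starting at `Sig` in which every term satisfying `P` is followed by the result
of one non-trivial application of the rule. -/
def IsClosureSeq (P : Set (Sym2 (Set X)) → Prop)
    (stepNT : Set (Sym2 (Set X)) → Set (Sym2 (Set X)) → Prop)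
    (Sig : Set (Sym2 (Set X))) (n : ℕ) (f : ℕ → Set (Sym2 (Set X))) : Prop :=
  f 0 = Sig ∧ (∀ i ≤ n, InPX (f i)) ∧
    (∀ i < n, P (f i) ∧ stepNT (f i) (f (i + 1)) ∧
      Preceq (f i) (f (i + 1)) ∧ f i ≠ f (i + 1))

/-- `cl` is a split closure of `Sig` (with `cl = none` playing the role of `ω`):
the last element of a split closure sequence for `Sig`, which either satisfies `P` and is
closed under the rule, or fails `P`, in which case it is replaced by `ω`. -/
def IsSplitClosure (P : Set (Sym2 (Set X)) → Prop)
    (stepNT : Set (Sym2 (Set X)) → Set (Sym2 (Set X)) → Prop)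
    (closed : Set (Sym2 (Set X)) → Prop)
    (Sig : Set (Sym2 (Set X))) (cl : Option (Set (Sym2 (Set X)))) : Prop :=
  ∃ (n : ℕ) (f : ℕ → Set (Sym2 (Set X))),
    IsClosureSeq P stepNT Sig n f ∧
    ((P (f n) ∧ closed (f n) ∧ cl = some (f n)) ∨ (¬ P (f n) ∧ cl = none))

/-- Split closure with respect to the `Y`-rule, `(P)` being weak compatibility. -/
def IsYClosure (Sig : Set (Sym2 (Set X))) (cl : Option (Set (Sym2 (Set X)))) : Prop :=
  IsSplitClosure WeaklyCompatible yStepNT yClosed Sig cl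

/-- Split closure with respect to the `M`-rule, `(P)` holding for all collections. -/
def IsMClosure (Sig : Set (Sym2 (Set X))) (cl : Option (Set (Sym2 (Set X)))) : Prop :=
  IsSplitClosure (fun _ => True) mStepNT mClosed Sig cl

/-- Split closure with respect to the combined `M/Y`-rule, `(P)` being weak compatibility. -/
def IsMYClosure (Sig : Set (Sym2 (Set X))) (cl : Option (Set (Sym2 (Set X)))) : Prop :=
  IsSplitClosure WeaklyCompatible
    (fun s s' => mStepNT s s' ∨ yStepNT s s') (fun s => mClosed s ∧ yClosed s) Sig cl

/-- `C` is an `X`-cycle: a connected graph on the vertex set `X` (`|X| ≥ 3`) in which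
every vertex has degree `2`. -/
def IsXCycle (C : SimpleGraph X) : Prop :=
  C.Connected ∧ 3 ≤ Nat.card X ∧ ∀ v : X, (C.neighborSet v).ncard = 2

/-- The partial split `S` is displayed by the `X`-cycle `C`: there are two distinct
edges of `C` whose deletion leaves one component containing one part of `S` and
another component containing the other part. -/
def DisplaysSplit (C : SimpleGraph X) (S : Sym2 (Set X)) : Prop :=
  ∃ A B : Set X, S = s(A, B) ∧
    ∃ e1 e2 : Sym2 X, e1 ∈ C.edgeSet ∧ e2 ∈ C.edgeSet ∧ e1 ≠ e2 ∧
      ∃ c1 c2 : (C.deleteEdges {e1, e2}).ConnectedComponent,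
        c1 ≠ c2 ∧ A ⊆ c1.supp ∧ B ⊆ c2.supp

/-- A collection of partial splits is displayed by `C` if each of its members is. -/
def DisplaysColl (C : SimpleGraph X) (Sig : Set (Sym2 (Set X))) : Prop :=
  ∀ S ∈ Sig, DisplaysSplit C S

/-- `cl ≠ ω` and the underlying collection is displayed by `C`. -/
def OptionDisplays (C : SimpleGraph X) (cl : Option (Set (Sym2 (Set X)))) : Prop :=
  ∃ Sig, cl = some Sig ∧ DisplaysColl C Sig

/-- The ground set `A ∪ B` of a partial split `A|B`. -/
def splitGround (S : Sym2 (Set X)) : Set X :=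
  ⋃₀ {A : Set X | A ∈ S}

/-- Membership in `P_ω(X) = P(X) ∪ {ω}`. -/
def InPOmega (x : Option (Set (Sym2 (Set X)))) : Prop :=
  x = none ∨ ∃ Sig, x = some Sig ∧ InPX Sig

/-- The order `⪯` on `P_ω(X)`, with `Sig ⪯ ω` for all `Sig` and `ω ⪯ ω`. -/
def PreceqO (x y : Option (Set (Sym2 (Set X)))) : Prop :=
  y = none ∨ ∃ Sig Sig', x = some Sig ∧ y = some Sig' ∧ Preceq Sig Sig'

/-- Split closure as a relation on `P_ω(X)`, with `⟨ω⟩ = ω`. -/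
def ClosO (cls : Set (Sym2 (Set X)) → Option (Set (Sym2 (Set X))) → Prop)
    (x y : Option (Set (Sym2 (Set X)))) : Prop :=
  (x = none ∧ y = none) ∨ ∃ Sig, x = some Sig ∧ cls Sig y


section Statement13Helpers

variable {X : Type*}

lemma isPartialSplit_rep {A B : Set X} (h : IsPartialSplit s(A,B)) :
    A.Nonempty ∧ B.Nonempty ∧ Disjoint A B := by
  obtain ⟨C, D, hE, hC, hD, hdis⟩ := h
  rcases Sym2.eq_iff.1 hE with ⟨rfl, rfl⟩ | ⟨rfl, rfl⟩
  · exact ⟨hC, hD, hdis⟩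
  · exact ⟨hD, hC, hdis.symm⟩

lemma splitExtends_of_subset {A B C D : Set X} (h1 : C ⊆ A) (h2 : D ⊆ B) :
    SplitExtends s(A,B) s(C,D) := ⟨A, B, C, D, rfl, rfl, h1, h2⟩

lemma splitExtends_refl (S : Sym2 (Set X)) : SplitExtends S S := by
  induction S using Sym2.ind with
  | _ A B => exact splitExtends_of_subset subset_rfl subset_rfl

lemma splitExtends_orient {T : Sym2 (Set X)} {C D : Set X} (h : SplitExtends T s(C,D)) :
    ∃ A B, T = s(A,B) ∧ C ⊆ A ∧ D ⊆ B := by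
  obtain ⟨A, B, C', D', hT, hS, h1, h2⟩ := h
  rcases Sym2.eq_iff.1 hS with ⟨hc, hd⟩ | ⟨hc, hd⟩
  · exact ⟨A, B, hT, hc ▸ h1, hd ▸ h2⟩
  · exact ⟨B, A, hT.trans Sym2.eq_swap, hc ▸ h2, hd ▸ h1⟩

lemma splitExtends_trans {S T U : Sym2 (Set X)} (h1 : SplitExtends T S)
    (h2 : SplitExtends U T) : SplitExtends U S := by
  obtain ⟨A, B, C, D, hT, hS, hc, hd⟩ := h1
  obtain ⟨A', B', hU, h1', h2'⟩ := splitExtends_orient (hT ▸ h2)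
  exact ⟨A', B', C, D, hU, hS, hc.trans h1', hd.trans h2'⟩

lemma splitGround_mk (A B : Set X) : splitGround s(A,B) = A ∪ B := by
  ext x
  simp only [splitGround, Set.mem_sUnion, Set.mem_setOf_eq, Sym2.mem_iff, Set.mem_union]
  constructor
  · rintro ⟨t, (rfl | rfl), hx⟩
    · exact Or.inl hx
    · exact Or.inr hx
  · rintro (hx | hx)
    · exact ⟨A, Or.inl rfl, hx⟩
    · exact ⟨B, Or.inr rfl, hx⟩

lemma splitGround_mono {S T : Sym2 (Set X)} (h : SplitExtends T S) :
    splitGround S ⊆ splitGround T := by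
  obtain ⟨A, B, C, D, hT, hS, hc, hd⟩ := h
  rw [hT, hS, splitGround_mk, splitGround_mk]
  exact Set.union_subset_union hc hd

/-- If `T` extends `S` and the ground of `T` is contained in that of `S`, with `T` a
partial split, then `T = S`. -/
lemma eq_of_extends_ground_subset {S T : Sym2 (Set X)} (hT : IsPartialSplit T)
    (h : SplitExtends T S) (hg : splitGround T ⊆ splitGround S) : T = S := by
  obtain ⟨A, B, C, D, hTr, hSr, hc, hd⟩ := h
  have hrep := isPartialSplit_rep (hTr ▸ hT)
  have hdis := hrep.2.2
  have hsub : A ∪ B ⊆ C ∪ D := by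
    rw [hTr, hSr, splitGround_mk, splitGround_mk] at hg; exact hg
  have hAC : A = C := by
    apply subset_antisymm _ hc
    intro x hx
    rcases hsub (Or.inl hx) with h' | h'
    · exact h'
    · exact absurd (hd h') (Set.disjoint_left.1 hdis hx)
  have hBD : B = D := by
    apply subset_antisymm _ hd
    intro x hx
    rcases hsub (Or.inr hx) with h' | h'
    · exact absurd (hc h') (Set.disjoint_right.1 hdis hx)
    · exact h'
  rw [hTr, hSr, hAC, hBD]

lemma preceq_refl (Sig : Set (Sym2 (Set X))) : Preceq Sig Sig :=
  fun S hS => ⟨S, hS, splitExtends_refl S⟩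

lemma preceq_trans {P Q R : Set (Sym2 (Set X))} (h1 : Preceq P Q) (h2 : Preceq Q R) :
    Preceq P R := by
  intro S hS
  obtain ⟨T, hT, hTS⟩ := h1 S hS
  obtain ⟨U, hU, hUT⟩ := h2 T hT
  exact ⟨U, hU, splitExtends_trans hTS hUT⟩

lemma exists_extend_in_sreduce [Fintype X] {F : Set (Sym2 (Set X))} (hF : F.Finite)
    (hps : ∀ S ∈ F, IsPartialSplit S) {S : Sym2 (Set X)} (hS : S ∈ F) :
    ∃ T ∈ sreduce F, SplitExtends T S := by
  classical
  set E : Set (Sym2 (Set X)) := {T | T ∈ F ∧ SplitExtends T S} with hEdef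
  have hEfin : E.Finite := hF.subset fun T hT => hT.1
  have hEne : E.Nonempty := ⟨S, hS, splitExtends_refl S⟩
  obtain ⟨T, hT, hmax⟩ :=
    hEfin.exists_maximalFor (fun T => (splitGround T).ncard) E hEne
  refine ⟨T, ⟨hT.1, ?_⟩, hT.2⟩
  rintro ⟨T', hT'F, hne, hext⟩
  have hT'E : T' ∈ E := ⟨hT'F, splitExtends_trans hT.2 hext⟩
  have hsub : splitGround T ⊆ splitGround T' := splitGround_mono hext
  have hle : (splitGround T).ncard ≤ (splitGround T').ncard :=
    Set.ncard_le_ncard hsub (Set.toFinite _)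
  have heq := le_antisymm hle (hmax hT'E hle)
  have hgeq : splitGround T = splitGround T' :=
    Set.eq_of_subset_of_ncard_le hsub (le_of_eq heq.symm) (Set.toFinite _)
  exact hne (eq_of_extends_ground_subset (hps T' hT'F) hext hgeq.symm.subset)

lemma preceq_antisymm_subset {S1 S2 : Set (Sym2 (Set X))} (h1 : InPX S1) (h2 : InPX S2)
    (p12 : Preceq S1 S2) (p21 : Preceq S2 S1) : S1 ⊆ S2 := by
  intro S hS
  obtain ⟨T, hT, hTS⟩ := p12 S hS
  obtain ⟨S', hS', hS'T⟩ := p21 T hT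
  have hS'S : SplitExtends S' S := splitExtends_trans hTS hS'T
  have hSS' : S' = S := by
    by_contra hne
    have hmem : S ∈ sreduce S1 := h1.2.symm ▸ hS
    exact hmem.2 ⟨S', hS', hne, hS'S⟩
  rw [hSS'] at hS'T
  have hTS' : T = S :=
    eq_of_extends_ground_subset (h2.1 T hT) hTS (splitGround_mono hS'T)
  exact hTS' ▸ hT

lemma preceq_antisymm {S1 S2 : Set (Sym2 (Set X))} (h1 : InPX S1) (h2 : InPX S2)
    (p12 : Preceq S1 S2) (p21 : Preceq S2 S1) : S1 = S2 :=
  subset_antisymm (preceq_antisymm_subset h1 h2 p12 p21)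
    (preceq_antisymm_subset h2 h1 p21 p12)

lemma wc_of_preceq {D S' : Set (Sym2 (Set X))} (hp : Preceq D S')
    (hwc : WeaklyCompatible S') : WeaklyCompatible D := by
  intro S1 h1 S2 h2 S3 h3 A1 B1 A2 B2 A3 B3 e1 e2 e3
  obtain ⟨T1, hT1, hx1⟩ := hp S1 h1
  obtain ⟨T2, hT2, hx2⟩ := hp S2 h2
  obtain ⟨T3, hT3, hx3⟩ := hp S3 h3
  obtain ⟨A1', B1', hTe1, s1, t1⟩ := splitExtends_orient (e1 ▸ hx1)
  obtain ⟨A2', B2', hTe2, s2, t2⟩ := splitExtends_orient (e2 ▸ hx2)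
  obtain ⟨A3', B3', hTe3, s3, t3⟩ := splitExtends_orient (e3 ▸ hx3)
  rcases hwc T1 hT1 T2 hT2 T3 hT3 A1' B1' A2' B2' A3' B3' hTe1 hTe2 hTe3 with
    h | h | h | h
  · exact Or.inl (Set.subset_empty_iff.1
      (h ▸ Set.inter_subset_inter (Set.inter_subset_inter s1 s2) s3))
  · exact Or.inr (Or.inl (Set.subset_empty_iff.1
      (h ▸ Set.inter_subset_inter (Set.inter_subset_inter t1 t2) s3)))
  · exact Or.inr (Or.inr (Or.inl (Set.subset_empty_iff.1
      (h ▸ Set.inter_subset_inter (Set.inter_subset_inter t1 s2) t3))))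
  · exact Or.inr (Or.inr (Or.inr (Set.subset_empty_iff.1
      (h ▸ Set.inter_subset_inter (Set.inter_subset_inter s1 t2) t3))))

lemma mOut_finite (A1 B1 A2 B2 : Set X) : (mOut A1 B1 A2 B2).Finite := by
  unfold mOut
  exact (((Set.finite_singleton _).insert _).insert _).insert _

lemma yOut_finite (A1 B1 A2 B2 A3 B3 : Set X) : (yOut A1 B1 A2 B2 A3 B3).Finite := by
  unfold yOut
  exact ((Set.finite_singleton _).insert _).insert _

lemma mStep_preceq [Fintype X] {D D' S' : Set (Sym2 (Set X))}
    (hPX' : InPX S') (hm : mClosed S') (hp : Preceq D S')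
    (hstep : mStepNT D D') : Preceq D' S' := by
  obtain ⟨A1, B1, A2, B2, h1, h2, hne, hc, hnt, rfl⟩ := hstep
  obtain ⟨T1, hT1m, hx1⟩ := hp _ h1
  obtain ⟨A1', B1', hT1, s1, t1⟩ := splitExtends_orient hx1
  obtain ⟨T2, hT2m, hx2⟩ := hp _ h2
  obtain ⟨A2', B2', hT2, s2, t2⟩ := splitExtends_orient hx2
  subst hT1; subst hT2
  have hrep1 := isPartialSplit_rep (hPX'.1 _ hT1m)
  have hrep2 := isPartialSplit_rep (hPX'.1 _ hT2m)
  have main : (∃ T ∈ S', SplitExtends T s(A1 ∩ A2, B1 ∪ B2)) ∧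
      (∃ T ∈ S', SplitExtends T s(B1 ∩ B2, A1 ∪ A2)) := by
    by_cases hTT : s(A1', B1') = s(A2', B2')
    · rcases Sym2.eq_iff.1 hTT with ⟨hA, hB⟩ | ⟨hA, hB⟩
      · constructor
        · exact ⟨s(A1', B1'), hT1m, splitExtends_of_subset
            (Set.inter_subset_left.trans s1) (Set.union_subset t1 (hB ▸ t2))⟩
        · refine ⟨s(A1', B1'), hT1m, ?_⟩
          rw [Sym2.eq_swap (a := A1')]
          exact splitExtends_of_subset
            (Set.inter_subset_left.trans t1) (Set.union_subset s1 (hA ▸ s2))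
      · exfalso
        obtain ⟨x, hx⟩ := hc.1
        have hxb : x ∈ B1' := by rw [hB]; exact s2 hx.2
        exact Set.disjoint_left.1 hrep1.2.2 (s1 hx.1) hxb
    · have hcond' : mCond A1' B1' A2' B2' :=
        ⟨hc.1.mono (Set.inter_subset_inter s1 s2),
         hc.2.mono (Set.inter_subset_inter t1 t2)⟩
      have hPrec := hm A1' B1' A2' B2' hT1m hT2m hTT hcond'
      have hps : ∀ S ∈ mOut A1' B1' A2' B2', IsPartialSplit S := by
        intro S hS
        simp only [mOut, Set.mem_insert_iff, Set.mem_singleton_iff] at hS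
        rcases hS with rfl | rfl | rfl | rfl
        · exact hPX'.1 _ hT1m
        · exact hPX'.1 _ hT2m
        · exact ⟨_, _, rfl, hcond'.1, hrep1.2.1.mono Set.subset_union_left,
            Set.disjoint_union_right.2
              ⟨hrep1.2.2.mono_left Set.inter_subset_left,
               hrep2.2.2.mono_left Set.inter_subset_right⟩⟩
        · exact ⟨_, _, rfl, hcond'.2, hrep1.1.mono Set.subset_union_left,
            Set.disjoint_union_right.2
              ⟨hrep1.2.2.symm.mono_left Set.inter_subset_left,
               hrep2.2.2.symm.mono_left Set.inter_subset_right⟩⟩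
      have get : ∀ M ∈ mOut A1' B1' A2' B2', ∃ T ∈ S', SplitExtends T M := by
        intro M hM
        obtain ⟨T, hTr, hText⟩ :=
          exists_extend_in_sreduce (mOut_finite _ _ _ _) hps hM
        obtain ⟨U, hU, hUT⟩ := hPrec T hTr
        exact ⟨U, hU, splitExtends_trans hText hUT⟩
      constructor
      · obtain ⟨U, hU, hext⟩ := get s(A1' ∩ A2', B1' ∪ B2') (by simp [mOut])
        exact ⟨U, hU, splitExtends_trans (splitExtends_of_subset
          (Set.inter_subset_inter s1 s2) (Set.union_subset_union t1 t2)) hext⟩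
      · obtain ⟨U, hU, hext⟩ := get s(B1' ∩ B2', A1' ∪ A2') (by simp [mOut])
        exact ⟨U, hU, splitExtends_trans (splitExtends_of_subset
          (Set.inter_subset_inter t1 t2) (Set.union_subset_union s1 s2)) hext⟩
  intro S hS
  rcases hS.1 with hS' | hS'
  · exact hp S hS'
  · simp only [mOut, Set.mem_insert_iff, Set.mem_singleton_iff] at hS'
    rcases hS' with rfl | rfl | rfl | rfl
    · exact hp _ h1
    · exact hp _ h2
    · exact main.1
    · exact main.2

lemma yStep_preceq [Fintype X] {D D' S' : Set (Sym2 (Set X))}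
    (hPX' : InPX S') (hwc' : WeaklyCompatible S') (hy : yClosed S') (hp : Preceq D S')
    (hstep : yStepNT D D') : Preceq D' S' := by
  obtain ⟨A1, B1, A2, B2, A3, B3, h1, h2, h3, hne12, hne13, hne23, hc, hnt, rfl⟩ := hstep
  obtain ⟨n1, n2, n3, e4⟩ := hc
  obtain ⟨T1, hT1m, hx1⟩ := hp _ h1
  obtain ⟨A1', B1', hT1, s1, t1⟩ := splitExtends_orient hx1
  obtain ⟨T2, hT2m, hx2⟩ := hp _ h2
  obtain ⟨A2', B2', hT2, s2, t2⟩ := splitExtends_orient hx2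
  obtain ⟨T3, hT3m, hx3⟩ := hp _ h3
  obtain ⟨A3', B3', hT3, s3, t3⟩ := splitExtends_orient hx3
  subst hT1; subst hT2; subst hT3
  have hrep1 := isPartialSplit_rep (hPX'.1 _ hT1m)
  have hrep2 := isPartialSplit_rep (hPX'.1 _ hT2m)
  have hrep3 := isPartialSplit_rep (hPX'.1 _ hT3m)
  -- the three primed splits are pairwise distinct
  have hne12' : s(A1', B1') ≠ s(A2', B2') := by
    intro h
    rcases Sym2.eq_iff.1 h with ⟨hA, hB⟩ | ⟨hA, hB⟩
    · obtain ⟨x, hx⟩ := n3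
      have hxa : x ∈ A1' := by rw [hA]; exact s2 hx.1.2
      exact Set.disjoint_left.1 hrep1.2.2 hxa (t1 hx.1.1)
    · obtain ⟨x, hx⟩ := n1
      have hxb : x ∈ B1' := by rw [hB]; exact s2 hx.1.2
      exact Set.disjoint_left.1 hrep1.2.2 (s1 hx.1.1) hxb
  have hne13' : s(A1', B1') ≠ s(A3', B3') := by
    intro h
    rcases Sym2.eq_iff.1 h with ⟨hA, hB⟩ | ⟨hA, hB⟩
    · obtain ⟨x, hx⟩ := n2
      have hxa : x ∈ A1' := by rw [hA]; exact s3 hx.2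
      exact Set.disjoint_left.1 hrep1.2.2 hxa (t1 hx.1.1)
    · obtain ⟨x, hx⟩ := n1
      have hxb : x ∈ B1' := by rw [hB]; exact s3 hx.2
      exact Set.disjoint_left.1 hrep1.2.2 (s1 hx.1.1) hxb
  have hne23' : s(A2', B2') ≠ s(A3', B3') := by
    intro h
    rcases Sym2.eq_iff.1 h with ⟨hA, hB⟩ | ⟨hA, hB⟩
    · obtain ⟨x, hx⟩ := n3
      have hxb : x ∈ B2' := by rw [hB]; exact t3 hx.2
      exact Set.disjoint_left.1 hrep2.2.2 (s2 hx.1.2) hxb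
    · obtain ⟨x, hx⟩ := n1
      have hxb : x ∈ B2' := by rw [hB]; exact s3 hx.2
      exact Set.disjoint_left.1 hrep2.2.2 (s2 hx.1.2) hxb
  -- the fourth intersection of the primed splits is empty, by weak compatibility
  have e4' : A1' ∩ B2' ∩ B3' = ∅ := by
    rcases hwc' _ hT1m _ hT2m _ hT3m A1' B1' A2' B2' A3' B3' rfl rfl rfl with
      h | h | h | h
    · exact absurd (Set.subset_empty_iff.1 (h ▸ Set.inter_subset_inter
        (Set.inter_subset_inter s1 s2) s3)) n1.ne_empty
    · exact absurd (Set.subset_empty_iff.1 (h ▸ Set.inter_subset_inter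
        (Set.inter_subset_inter t1 t2) s3)) n2.ne_empty
    · exact absurd (Set.subset_empty_iff.1 (h ▸ Set.inter_subset_inter
        (Set.inter_subset_inter t1 s2) t3)) n3.ne_empty
    · exact h
  have hcond' : yCond A1' B1' A2' B2' A3' B3' :=
    ⟨n1.mono (Set.inter_subset_inter (Set.inter_subset_inter s1 s2) s3),
     n2.mono (Set.inter_subset_inter (Set.inter_subset_inter t1 t2) s3),
     n3.mono (Set.inter_subset_inter (Set.inter_subset_inter t1 s2) t3), e4'⟩
  have hPrec := hy A1' B1' A2' B2' A3' B3' hT1m hT2m hT3m hne12' hne13' hne23' hcond'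
  have hd23_1 : Disjoint (B2' ∩ B3') A1' := by
    rw [Set.disjoint_left]
    intro x hx hxa
    have : x ∈ A1' ∩ B2' ∩ B3' := ⟨⟨hxa, hx.1⟩, hx.2⟩
    simp [e4'] at this
  have hd13_2 : Disjoint (A1' ∩ B3') B2' := by
    rw [Set.disjoint_left]
    intro x hx hxb
    have : x ∈ A1' ∩ B2' ∩ B3' := ⟨⟨hx.1, hxb⟩, hx.2⟩
    simp [e4'] at this
  have hd12_3 : Disjoint (A1' ∩ B2') B3' := by
    rw [Set.disjoint_left]
    intro x hx hxb
    have : x ∈ A1' ∩ B2' ∩ B3' := ⟨hx, hxb⟩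
    simp [e4'] at this
  have hps : ∀ S ∈ yOut A1' B1' A2' B2' A3' B3', IsPartialSplit S := by
    intro S hS
    simp only [yOut, Set.mem_insert_iff, Set.mem_singleton_iff] at hS
    rcases hS with rfl | rfl | rfl
    · exact ⟨_, _, rfl, hrep1.2.1.mono Set.subset_union_left, hrep1.1,
        Set.disjoint_union_left.2 ⟨hrep1.2.2.symm, hd23_1⟩⟩
    · exact ⟨_, _, rfl, hrep2.1.mono Set.subset_union_left, hrep2.2.1,
        Set.disjoint_union_left.2 ⟨hrep2.2.2, hd13_2⟩⟩
    · exact ⟨_, _, rfl, hrep3.1.mono Set.subset_union_left, hrep3.2.1,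
        Set.disjoint_union_left.2 ⟨hrep3.2.2, hd12_3⟩⟩
  have get : ∀ M ∈ yOut A1' B1' A2' B2' A3' B3', ∃ T ∈ S', SplitExtends T M := by
    intro M hM
    obtain ⟨T, hTr, hText⟩ :=
      exists_extend_in_sreduce (yOut_finite _ _ _ _ _ _) hps hM
    obtain ⟨U, hU, hUT⟩ := hPrec T hTr
    exact ⟨U, hU, splitExtends_trans hText hUT⟩
  intro S hS
  rcases hS.1 with hS' | hS'
  · exact hp S hS'
  · simp only [yOut, Set.mem_insert_iff, Set.mem_singleton_iff] at hS'
    rcases hS' with rfl | rfl | rfl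
    · obtain ⟨U, hU, hext⟩ := get s(B1' ∪ (B2' ∩ B3'), A1') (by simp [yOut])
      exact ⟨U, hU, splitExtends_trans (splitExtends_of_subset
        (Set.union_subset_union t1 (Set.inter_subset_inter t2 t3)) s1) hext⟩
    · obtain ⟨U, hU, hext⟩ := get s(A2' ∪ (A1' ∩ B3'), B2') (by simp [yOut])
      exact ⟨U, hU, splitExtends_trans (splitExtends_of_subset
        (Set.union_subset_union s2 (Set.inter_subset_inter s1 t3)) t2) hext⟩
    · obtain ⟨U, hU, hext⟩ := get s(A3' ∪ (A1' ∩ B2'), B3') (by simp [yOut])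
      exact ⟨U, hU, splitExtends_trans (splitExtends_of_subset
        (Set.union_subset_union s3 (Set.inter_subset_inter s1 t2)) t3) hext⟩

/-- Along an `M/Y`-closure sequence, every term is `⪯` any weakly compatible,
`M`- and `Y`-closed collection in `P(X)` above the initial term. -/
lemma seq_bounded [Fintype X] {Sig Tgt : Set (Sym2 (Set X))} {n : ℕ}
    {f : ℕ → Set (Sym2 (Set X))}
    (hc : IsClosureSeq WeaklyCompatible
      (fun s s' => mStepNT s s' ∨ yStepNT s s') Sig n f)
    (hPXT : InPX Tgt) (hwcT : WeaklyCompatible Tgt)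
    (hmT : mClosed Tgt) (hyT : yClosed Tgt) (hbase : Preceq Sig Tgt) :
    ∀ i ≤ n, Preceq (f i) Tgt := by
  intro i
  induction i with
  | zero => intro _; rw [hc.1]; exact hbase
  | succ k ih =>
    intro hk
    have hk' : k < n := Nat.lt_of_succ_le hk
    rcases (hc.2.2 k hk').2.1 with h | h
    · exact mStep_preceq hPXT hmT (ih hk'.le) h
    · exact yStep_preceq hPXT hwcT hyT (ih hk'.le) h

lemma seq_chain {P : Set (Sym2 (Set X)) → Prop}
    {step : Set (Sym2 (Set X)) → Set (Sym2 (Set X)) → Prop}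
    {Sig : Set (Sym2 (Set X))} {n : ℕ} {f : ℕ → Set (Sym2 (Set X))}
    (hc : IsClosureSeq P step Sig n f) : ∀ i ≤ n, Preceq Sig (f i) := by
  intro i
  induction i with
  | zero => intro _; rw [hc.1]; exact preceq_refl _
  | succ k ih =>
    intro hk
    have hk' : k < n := Nat.lt_of_succ_le hk
    exact preceq_trans (ih hk'.le) (hc.2.2 k hk').2.2.1

end Statement13Helpers

/-- for a weakly compatible `Σ ∈ P(X)`, any two split closures of `Σ`
obtained solely via the combined `M/Y`-rule (with `(P)` being weak compatibility) are equal. -/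
theorem statement13 {X : Type*} [Fintype X] (Sig : Set (Sym2 (Set X)))
    (hPX : InPX Sig) (hwc : WeaklyCompatible Sig)
    (cl1 cl2 : Option (Set (Sym2 (Set X))))
    (h1 : IsMYClosure Sig cl1) (h2 : IsMYClosure Sig cl2) :
    cl1 = cl2 := by
  obtain ⟨n1, f1, hc1, hend1⟩ := h1
  obtain ⟨n2, f2, hc2, hend2⟩ := h2
  have hSig1 : Preceq Sig (f1 n1) := seq_chain hc1 n1 le_rfl
  have hSig2 : Preceq Sig (f2 n2) := seq_chain hc2 n2 le_rfl
  have hPX1 : InPX (f1 n1) := hc1.2.1 n1 le_rfl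
  have hPX2 : InPX (f2 n2) := hc2.2.1 n2 le_rfl
  rcases hend1 with ⟨hP1, hcl1, rfl⟩ | ⟨hnP1, rfl⟩ <;>
    rcases hend2 with ⟨hP2, hcl2, rfl⟩ | ⟨hnP2, rfl⟩
  · -- both closures exist: they coincide by antisymmetry of `⪯`
    have p12 : Preceq (f1 n1) (f2 n2) :=
      seq_bounded hc1 hPX2 hP2 hcl2.1 hcl2.2 hSig2 n1 le_rfl
    have p21 : Preceq (f2 n2) (f1 n1) :=
      seq_bounded hc2 hPX1 hP1 hcl1.1 hcl1.2 hSig1 n2 le_rfl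
    exact congrArg some (preceq_antisymm hPX1 hPX2 p12 p21)
  · -- first closure exists, second sequence ends at a non-weakly-compatible set:
    -- impossible, since the end of the second sequence is `⪯` the first closure
    exact absurd (wc_of_preceq
      (seq_bounded hc2 hPX1 hP1 hcl1.1 hcl1.2 hSig1 n2 le_rfl) hP1) hnP2
  · exact absurd (wc_of_preceq
      (seq_bounded hc1 hPX2 hP2 hcl2.1 hcl2.2 hSig2 n1 le_rfl) hP2) hnP1
  · rfl
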